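/- Let R = ℝ[x₁,…,xₙ], let 𝔞, 𝔞′ be homogeneous ideals of R, and let f ∈ R be a homogeneous polynomial of degree k with f ∉ 𝔞. Suppose 𝔞′ ⊆ 𝔞 : f. If R/𝔞′ is a Poincaré duality algebra of socle degree r and R/𝔞 is a Poincaré duality algebra of socle degree r + k, then 𝔞′ = 𝔞 : f. -/

import Mathlib

open MvPolynomial

noncomputable section

/-- `R/I` is a Poincaré duality algebra of socle degree `r`, phrased in terms of the
homogeneous ideal `I` of the polynomial ring `R = ℝ[x₁,…,xₙ]`:
all homogeneous elements of degree `> r` lie in `I`, the degree-`r` part of the quotient is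
one-dimensional (nonzero), and the multiplication pairing
`(R/I)_q × (R/I)_{r-q} → (R/I)_r` is non-degenerate. -/
def IsPDIdeal (n : ℕ) (I : Ideal (MvPolynomial (Fin n) ℝ)) (r : ℕ) : Prop :=
  (∀ f : MvPolynomial (Fin n) ℝ, ∀ d : ℕ, r < d → f.IsHomogeneous d → f ∈ I) ∧
  (∃ f : MvPolynomial (Fin n) ℝ, f.IsHomogeneous r ∧ f ∉ I) ∧
  (∀ f g : MvPolynomial (Fin n) ℝ, f.IsHomogeneous r → g.IsHomogeneous r → f ∉ I →
    ∃ c : ℝ, g - c • f ∈ I) ∧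
  (∀ q : ℕ, q ≤ r → ∀ f : MvPolynomial (Fin n) ℝ, f.IsHomogeneous q → f ∉ I →
    ∃ g : MvPolynomial (Fin n) ℝ, g.IsHomogeneous (r - q) ∧ f * g ∉ I)

/-- if `𝔞' ⊆ 𝔞 : f` for a homogeneous `f ∉ 𝔞` of degree `k`, and `R/𝔞'` is a
Poincaré duality algebra of socle degree `r` while `R/𝔞` is one of socle degree `r + k`,
then `𝔞' = 𝔞 : f`. -/
theorem statement0 (n : ℕ) (𝔞 𝔞' : Ideal (MvPolynomial (Fin n) ℝ))
    (h𝔞hom : ∀ f ∈ 𝔞, ∀ d : ℕ, homogeneousComponent d f ∈ 𝔞)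
    (h𝔞'hom : ∀ f ∈ 𝔞', ∀ d : ℕ, homogeneousComponent d f ∈ 𝔞')
    (f : MvPolynomial (Fin n) ℝ) (k : ℕ) (hf : f.IsHomogeneous k) (hf𝔞 : f ∉ 𝔞)
    (hsub : 𝔞' ≤ 𝔞.colon (Ideal.span {f}))
    (r : ℕ) (hPD' : IsPDIdeal n 𝔞' r) (hPD : IsPDIdeal n 𝔞 (r + k)) :
    𝔞' = 𝔞.colon (Ideal.span {f}) := by
  refine le_antisymm hsub fun g hg => ?_
  by_contra hg'
  -- get a homogeneous component of g outside 𝔞'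
  obtain ⟨d, hd⟩ : ∃ d, homogeneousComponent d g ∉ 𝔞' := by
    by_contra h
    push_neg at h
    exact hg' (by rw [← sum_homogeneousComponent g]; exact Submodule.sum_mem _ fun i _ => h i)
  set gd := homogeneousComponent d g with hgddef
  have hgdhom : gd.IsHomogeneous d := homogeneousComponent_isHomogeneous d g
  have hdle : d ≤ g.totalDegree := by
    by_contra hlt
    apply hd
    rw [hgddef, homogeneousComponent_eq_zero _ _ (lt_of_not_ge hlt)]
    exact Submodule.zero_mem _
  -- gd * f ∈ 𝔞
  have hgf : g * f ∈ 𝔞 := Ideal.mem_colon_span_singleton.mp hg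
  have hcomp : homogeneousComponent (d + k) (g * f) = gd * f := by
    have hsum : g * f = ∑ i ∈ Finset.range (g.totalDegree + 1),
        homogeneousComponent i g * f := by
      rw [← Finset.sum_mul, sum_homogeneousComponent]
    rw [hsum, map_sum]
    rw [Finset.sum_eq_single d]
    · exact (homogeneousComponent_of_mem (((homogeneousComponent_isHomogeneous d g).mul hf))).trans
        (by simp [hgddef])
    · intro i _ hi
      rw [homogeneousComponent_of_mem (((homogeneousComponent_isHomogeneous i g).mul hf))]
      rw [if_neg (by omega)]
    · intro hmem
      exact absurd (Finset.mem_range.mpr (Nat.lt_succ_of_le hdle)) hmem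
  have hgdf : gd * f ∈ 𝔞 := by rw [← hcomp]; exact h𝔞hom _ hgf _
  -- d ≤ r
  have hdr : d ≤ r := by
    by_contra hlt
    exact hd (hPD'.1 gd d (lt_of_not_ge hlt) hgdhom)
  -- pair gd up to degree r
  obtain ⟨h, hhom, hgh⟩ := hPD'.2.2.2 d hdr gd hgdhom hd
  have hghhom : (gd * h).IsHomogeneous r := by
    have := hgdhom.mul hhom
    rwa [Nat.add_sub_cancel' hdr] at this
  have hghf : gd * h * f ∈ 𝔞 := by
    have : gd * h * f = gd * f * h := by ring
    rw [this]; exact Ideal.mul_mem_right _ _ hgdf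
  -- pair f up to degree r + k in 𝔞
  obtain ⟨w, hwhom, hwf⟩ := hPD.2.2.2 k (Nat.le_add_left k r) f hf hf𝔞
  have hwhom' : w.IsHomogeneous r := by rwa [Nat.add_sub_cancel] at hwhom
  have hw' : w ∉ 𝔞' := fun hw =>
    hwf (by rw [mul_comm]; exact Ideal.mem_colon_span_singleton.mp (hsub hw))
  obtain ⟨c, hc⟩ := hPD'.2.2.1 w (gd * h) hwhom' hghhom hw'
  have hcne : c ≠ 0 := by
    rintro rfl
    exact hgh (by simpa using hc)
  have hdiff : (gd * h - c • w) * f ∈ 𝔞 := Ideal.mem_colon_span_singleton.mp (hsub hc)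
  have hwfmem : c • (w * f) ∈ 𝔞 := by
    have heq : c • (w * f) = gd * h * f - (gd * h - c • w) * f := by
      rw [sub_mul, smul_mul_assoc]; ring
    rw [heq]
    exact Ideal.sub_mem _ hghf hdiff
  have : w * f ∈ 𝔞 := by
    have h2 := Ideal.mul_mem_left 𝔞 (C c⁻¹) hwfmem
    rwa [smul_eq_C_mul, ← mul_assoc, ← C_mul, inv_mul_cancel₀ hcne, C_1, one_mul] at h2
  exact hwf ((by rwa [mul_comm] at this))
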